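/- For every α > 0 and every z ∈ Ω^{(α)}, one has Re χ_α(z) < Re χ_α(−z). -/

import Mathlib

open Complex

/-- The principal branch of the complex square root. -/
noncomputable def csqrt (z : ℂ) : ℂ := z ^ (1 / 2 : ℂ)

/-- `χ_α(z) := (1/2)·√(4α²+(1+z)²) + ((1+z)/2)·log(2α/(1+z+√(4α²+(1+z)²)))`,
with principal branches of square root and logarithm. -/
noncomputable def chi (α : ℝ) (z : ℂ) : ℂ :=
  (1 / 2 : ℂ) * csqrt (4 * (α : ℂ) ^ 2 + (1 + z) ^ 2) +
    (1 + z) / 2 * Complex.log (2 * (α : ℂ) / (1 + z + csqrt (4 * (α : ℂ) ^ 2 + (1 + z) ^ 2)))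

/-- The open rectangle `Ω^{(α)} = (0,1) + 2iα(0,1)`. -/
def Omega (α : ℝ) : Set ℂ :=
  {z : ℂ | 0 < z.re ∧ z.re < 1 ∧ 0 < z.im ∧ z.im < 2 * α}


lemma csqrt_sq {u : ℂ} (hu : u ≠ 0) : csqrt u * csqrt u = u := by
  rw [csqrt, ← Complex.cpow_add _ _ hu]
  norm_num

lemma csqrt_re_pos {u : ℂ} (hu : 0 < u.im) : 0 < (csqrt u).re := by
  have hu0 : u ≠ 0 := by intro h; rw [h] at hu; simp at hu
  rw [csqrt, Complex.cpow_def_of_ne_zero hu0, Complex.exp_re]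
  apply mul_pos (Real.exp_pos _)
  apply Real.cos_pos_of_mem_Ioo
  have h1 : -Real.pi < u.arg := Complex.neg_pi_lt_arg u
  have h2 : u.arg ≤ Real.pi := Complex.arg_le_pi u
  have h3 : u.arg ≠ Real.pi := by
    intro h; exact absurd (Complex.arg_eq_pi_iff.mp h).2 hu.ne'
  have him : (Complex.log u * (1 / 2 : ℂ)).im = u.arg / 2 := by
    simp [Complex.mul_im, Complex.log_im]
    ring
  rw [him]
  constructor <;> [nlinarith [Real.pi_pos]; nlinarith [lt_of_le_of_ne h2 h3]]

lemma csqrt_im_pos {u : ℂ} (hu : 0 < u.im) : 0 < (csqrt u).im := by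
  have hu0 : u ≠ 0 := by intro h; rw [h] at hu; simp at hu
  rw [csqrt, Complex.cpow_def_of_ne_zero hu0, Complex.exp_im]
  apply mul_pos (Real.exp_pos _)
  have h2 : u.arg ≤ Real.pi := Complex.arg_le_pi u
  have h3 : u.arg ≠ Real.pi := by
    intro h; exact absurd (Complex.arg_eq_pi_iff.mp h).2 hu.ne'
  have h4 : 0 ≤ u.arg := Complex.arg_nonneg_iff.mpr hu.le
  have h5 : u.arg ≠ 0 := by
    intro h; exact absurd (Complex.arg_eq_zero_iff.mp h).2 hu.ne'
  have him : (Complex.log u * (1 / 2 : ℂ)).im = u.arg / 2 := by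
    simp [Complex.mul_im, Complex.log_im]
    ring
  rw [him]
  apply Real.sin_pos_of_pos_of_lt_pi
  · exact div_pos (lt_of_le_of_ne h4 (Ne.symm h5)) two_pos
  · nlinarith [lt_of_le_of_ne h2 h3, Real.pi_pos]

lemma Qim_pos {α : ℝ} {z : ℂ} (hre : -1 < z.re) (him : 0 < z.im) :
    0 < (4 * (α : ℂ) ^ 2 + (1 + z) ^ 2).im := by
  simp [Complex.add_im, Complex.mul_im, pow_two, Complex.add_re]
  nlinarith

lemma abs_v_gt {α : ℝ} (hα : 0 < α) {z : ℂ} (hre : -1 < z.re) (him : 0 < z.im) :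
    2 * α < ‖1 + z + csqrt (4 * (α : ℂ) ^ 2 + (1 + z) ^ 2)‖ := by
  have hQim : 0 < (4 * (α : ℂ) ^ 2 + (1 + z) ^ 2).im := Qim_pos hre him
  have hSre : 0 < (csqrt (4 * (α : ℂ) ^ 2 + (1 + z) ^ 2)).re := csqrt_re_pos hQim
  have hSim : 0 < (csqrt (4 * (α : ℂ) ^ 2 + (1 + z) ^ 2)).im := csqrt_im_pos hQim
  have hQ0 : (4 * (α : ℂ) ^ 2 + (1 + z) ^ 2) ≠ 0 := fun h => by simp [h] at hQim
  have hsq := csqrt_sq hQ0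
  generalize hSdef : csqrt (4 * (α : ℂ) ^ 2 + (1 + z) ^ 2) = S at *
  have hdiff : Complex.normSq (1 + z + S) - Complex.normSq (1 + z - S)
      = 4 * ((1 + z.re) * S.re + z.im * S.im) := by
    simp [Complex.normSq_apply, Complex.add_re, Complex.add_im, Complex.sub_re, Complex.sub_im]
    ring
  have hpos : 0 < (1 + z.re) * S.re + z.im * S.im := by nlinarith
  have hprod : ‖1 + z + S‖ * ‖1 + z - S‖ = 4 * α ^ 2 := by
    rw [← norm_mul]
    have h1 : (1 + z + S) * (1 + z - S) = -(((4 * α ^ 2 : ℝ)) : ℂ) := by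
      have h2 : (1 + z + S) * (1 + z - S) = (1 + z) ^ 2 - S * S := by ring
      rw [h2, hsq]; push_cast; ring
    rw [h1, norm_neg, Complex.norm_real, Real.norm_eq_abs]
    exact abs_of_nonneg (by positivity)
  have hAB : ‖1 + z - S‖ < ‖1 + z + S‖ := by
    have h1 : ‖1 + z - S‖ ^ 2 < ‖1 + z + S‖ ^ 2 := by
      rw [Complex.sq_norm, Complex.sq_norm]; nlinarith
    exact lt_of_pow_lt_pow_left₀ 2 (norm_nonneg _) h1
  have hA0 : 0 < ‖1 + z + S‖ := lt_of_le_of_lt (norm_nonneg _) hAB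
  nlinarith

lemma alg_identity (S w a L : ℂ) (hS : S ≠ 0) (hv : w + S ≠ 0) (ha : a ≠ 0) :
    (1 / 2 : ℂ) * L = 1 / 2 * (w / S) +
      (1 / 2 * L + w / 2 * ((0 * (w + S) - a * (1 + w / S)) / (w + S) ^ 2 / (a / (w + S)))) := by
  have hX : (0 * (w + S) - a * (1 + w / S)) / (w + S) ^ 2 / (a / (w + S)) = -(1 / S) := by
    field_simp
    ring
  rw [hX]
  field_simp
  ring

lemma chi_hasDerivAt {α : ℝ} (hα : 0 < α) {z : ℂ} (hre : -1 < z.re) (him : 0 < z.im) :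
    HasDerivAt (chi α)
      ((1 / 2 : ℂ) * Complex.log (2 * (α : ℂ) / (1 + z + csqrt (4 * (α : ℂ) ^ 2 + (1 + z) ^ 2)))) z := by
  have hQim : 0 < (4 * (α : ℂ) ^ 2 + (1 + z) ^ 2).im := Qim_pos hre him
  have hSre : 0 < (csqrt (4 * (α : ℂ) ^ 2 + (1 + z) ^ 2)).re := csqrt_re_pos hQim
  have hSim : 0 < (csqrt (4 * (α : ℂ) ^ 2 + (1 + z) ^ 2)).im := csqrt_im_pos hQim
  have hQ0 : (4 * (α : ℂ) ^ 2 + (1 + z) ^ 2) ≠ 0 := fun h => by simp [h] at hQim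
  have hS0 : csqrt (4 * (α : ℂ) ^ 2 + (1 + z) ^ 2) ≠ 0 := by
    intro h; rw [h] at hSre; simp at hSre
  have hv0 : (1 + z + csqrt (4 * (α : ℂ) ^ 2 + (1 + z) ^ 2)) ≠ 0 := by
    intro h
    have h2 : (1 + z + csqrt (4 * (α : ℂ) ^ 2 + (1 + z) ^ 2)).re = 0 := by rw [h]; simp
    simp only [Complex.add_re, Complex.one_re] at h2
    nlinarith
  have hvre : 0 < (1 + z + csqrt (4 * (α : ℂ) ^ 2 + (1 + z) ^ 2)).re := by
    simp only [Complex.add_re, Complex.one_re]; nlinarith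
  have hslit : (4 * (α : ℂ) ^ 2 + (1 + z) ^ 2) ∈ Complex.slitPlane :=
    Complex.mem_slitPlane_iff.mpr (Or.inr hQim.ne')
  have hF : HasDerivAt (fun w : ℂ => 4 * (α : ℂ) ^ 2 + (1 + w) ^ 2) (2 * (1 + z)) z := by
    simpa using (((hasDerivAt_id z).const_add (1 : ℂ)).pow 2).const_add (4 * (α : ℂ) ^ 2)
  have hS : HasDerivAt (fun w : ℂ => csqrt (4 * (α : ℂ) ^ 2 + (1 + w) ^ 2))
      ((1 + z) / csqrt (4 * (α : ℂ) ^ 2 + (1 + z) ^ 2)) z := by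
    have h := hF.cpow_const (c := (1 / 2 : ℂ)) hslit
    refine h.congr_deriv ?_
    rw [show (1 / 2 - 1 : ℂ) = -(1 / 2) by norm_num, Complex.cpow_neg]
    simp only [csqrt] at hS0 ⊢
    field_simp
  have hv : HasDerivAt (fun w : ℂ => 1 + w + csqrt (4 * (α : ℂ) ^ 2 + (1 + w) ^ 2))
      (1 + (1 + z) / csqrt (4 * (α : ℂ) ^ 2 + (1 + z) ^ 2)) z :=
    ((hasDerivAt_id z).const_add (1 : ℂ)).add hS
  have hu := (hasDerivAt_const z (2 * (α : ℂ))).div hv hv0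
  have huval : (2 * (α : ℂ) / (1 + z + csqrt (4 * (α : ℂ) ^ 2 + (1 + z) ^ 2))) ∈
      Complex.slitPlane := by
    apply Complex.mem_slitPlane_iff.mpr
    left
    rw [Complex.div_re]
    have h2 : 0 < Complex.normSq (1 + z + csqrt (4 * (α : ℂ) ^ 2 + (1 + z) ^ 2)) :=
      Complex.normSq_pos.mpr hv0
    have hre2 : (2 * (α : ℂ)).re = 2 * α := by simp
    have him2 : (2 * (α : ℂ)).im = 0 := by simp
    rw [hre2, him2, zero_mul, zero_div, add_zero]
    exact div_pos (by nlinarith) h2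
  have hlog := hu.clog huval
  have hlin : HasDerivAt (fun w : ℂ => (1 + w) / 2) (1 / 2 : ℂ) z := by
    simpa using ((hasDerivAt_id z).const_add (1 : ℂ)).div_const 2
  have hmul := hlin.mul hlog
  have htot := (hS.const_mul (1 / 2 : ℂ)).add hmul
  have hchi : chi α = fun w : ℂ =>
      (1 / 2 : ℂ) * csqrt (4 * (α : ℂ) ^ 2 + (1 + w) ^ 2) +
      (1 + w) / 2 * Complex.log (2 * (α : ℂ) / (1 + w + csqrt (4 * (α : ℂ) ^ 2 + (1 + w) ^ 2))) := rfl
  rw [hchi]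
  refine htot.congr_deriv ?_
  have hα0 : (2 * (α : ℂ)) ≠ 0 := by
    simp only [ne_eq, mul_eq_zero]
    push_neg
    exact ⟨two_ne_zero, by exact_mod_cast hα.ne'⟩
  exact (alg_identity _ _ _ _ hS0 hv0 hα0).symm

lemma re_deriv_neg {α : ℝ} (hα : 0 < α) {z : ℂ} (hre : -1 < z.re) (him : 0 < z.im) :
    ((1 / 2 : ℂ) * Complex.log (2 * (α : ℂ) / (1 + z + csqrt (4 * (α : ℂ) ^ 2 + (1 + z) ^ 2)))).re
      < 0 := by
  have hgt := abs_v_gt hα hre him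
  have hA0 : (0:ℝ) < ‖1 + z + csqrt (4 * (α : ℂ) ^ 2 + (1 + z) ^ 2)‖ := by linarith
  have habs : ‖2 * (α : ℂ) / (1 + z + csqrt (4 * (α : ℂ) ^ 2 + (1 + z) ^ 2))‖
      = 2 * α / ‖1 + z + csqrt (4 * (α : ℂ) ^ 2 + (1 + z) ^ 2)‖ := by
    rw [norm_div]
    congr 1
    rw [show (2 * (α : ℂ)) = ((2 * α : ℝ) : ℂ) by push_cast; ring, Complex.norm_real, Real.norm_eq_abs]
    exact abs_of_nonneg (by positivity)
  have hlt1 : ‖2 * (α : ℂ) / (1 + z + csqrt (4 * (α : ℂ) ^ 2 + (1 + z) ^ 2))‖ < 1 := by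
    rw [habs, div_lt_one hA0]; exact hgt
  have hpos : 0 < ‖2 * (α : ℂ) / (1 + z + csqrt (4 * (α : ℂ) ^ 2 + (1 + z) ^ 2))‖ := by
    rw [habs]; positivity
  have hrw : ((1 / 2 : ℂ) * Complex.log (2 * (α : ℂ) /
      (1 + z + csqrt (4 * (α : ℂ) ^ 2 + (1 + z) ^ 2)))).re
      = 1 / 2 * Real.log (‖2 * (α : ℂ) /
        (1 + z + csqrt (4 * (α : ℂ) ^ 2 + (1 + z) ^ 2))‖) := by
    rw [show (1 / 2 : ℂ) = ((1 / 2 : ℝ) : ℂ) by norm_num, Complex.re_ofReal_mul, Complex.log_re]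
  rw [hrw]
  have := Real.log_neg hpos hlt1
  linarith

lemma chi_conj {α : ℝ} (hα : 0 < α) {w : ℂ} (hre : -1 < w.re) (him : 0 < w.im) :
    chi α ((starRingEnd ℂ) w) = (starRingEnd ℂ) (chi α w) := by
  have hQim : 0 < (4 * (α : ℂ) ^ 2 + (1 + w) ^ 2).im := Qim_pos hre him
  have hSre : 0 < (csqrt (4 * (α : ℂ) ^ 2 + (1 + w) ^ 2)).re := csqrt_re_pos hQim
  have hargQ : (4 * (α : ℂ) ^ 2 + (1 + w) ^ 2).arg ≠ Real.pi := by
    intro h; exact absurd (Complex.arg_eq_pi_iff.mp h).2 hQim.ne'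
  have hQconj : 4 * (α : ℂ) ^ 2 + (1 + (starRingEnd ℂ) w) ^ 2
      = (starRingEnd ℂ) (4 * (α : ℂ) ^ 2 + (1 + w) ^ 2) := by
    simp [map_add, map_mul, map_pow, Complex.conj_ofReal, map_ofNat]
  have hhalf : (starRingEnd ℂ) (1 / 2 : ℂ) = (1 / 2 : ℂ) := by simp [map_ofNat]
  have hSconj : csqrt (4 * (α : ℂ) ^ 2 + (1 + (starRingEnd ℂ) w) ^ 2)
      = (starRingEnd ℂ) (csqrt (4 * (α : ℂ) ^ 2 + (1 + w) ^ 2)) := by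
    rw [hQconj, csqrt, csqrt, Complex.conj_cpow _ _ hargQ, hhalf]
  have hvre : 0 < (1 + w + csqrt (4 * (α : ℂ) ^ 2 + (1 + w) ^ 2)).re := by
    simp only [Complex.add_re, Complex.one_re]; nlinarith
  have hv0 : (1 + w + csqrt (4 * (α : ℂ) ^ 2 + (1 + w) ^ 2)) ≠ 0 := by
    intro h; rw [h] at hvre; simp at hvre
  have hure : 0 < (2 * (α : ℂ) / (1 + w + csqrt (4 * (α : ℂ) ^ 2 + (1 + w) ^ 2))).re := by
    rw [Complex.div_re]
    have h2 : 0 < Complex.normSq (1 + w + csqrt (4 * (α : ℂ) ^ 2 + (1 + w) ^ 2)) :=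
      Complex.normSq_pos.mpr hv0
    have hre2 : (2 * (α : ℂ)).re = 2 * α := by simp
    have him2 : (2 * (α : ℂ)).im = 0 := by simp
    rw [hre2, him2, zero_mul, zero_div, add_zero]
    exact div_pos (by nlinarith) h2
  have hargu : (2 * (α : ℂ) / (1 + w + csqrt (4 * (α : ℂ) ^ 2 + (1 + w) ^ 2))).arg
      ≠ Real.pi := by
    intro h
    have := (Complex.arg_eq_pi_iff.mp h).1
    linarith
  have huconj : 2 * (α : ℂ) / (1 + (starRingEnd ℂ) w + csqrt (4 * (α : ℂ) ^ 2 +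
        (1 + (starRingEnd ℂ) w) ^ 2))
      = (starRingEnd ℂ) (2 * (α : ℂ) / (1 + w + csqrt (4 * (α : ℂ) ^ 2 + (1 + w) ^ 2))) := by
    rw [hSconj]
    simp [map_div₀, map_add, map_mul, Complex.conj_ofReal, map_ofNat]
  show (1 / 2 : ℂ) * csqrt (4 * (α : ℂ) ^ 2 + (1 + (starRingEnd ℂ) w) ^ 2) +
      (1 + (starRingEnd ℂ) w) / 2 * Complex.log (2 * (α : ℂ) / (1 + (starRingEnd ℂ) w +
        csqrt (4 * (α : ℂ) ^ 2 + (1 + (starRingEnd ℂ) w) ^ 2))) = _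
  rw [huconj, hSconj, Complex.log_conj _ hargu]
  simp only [chi, map_add, map_mul, map_div₀, map_one, map_ofNat, hhalf, Complex.conj_ofReal]

theorem re_chi_lt_re_chi_neg (α : ℝ) (hα : 0 < α) (z : ℂ) (hz : z ∈ Omega α) :
    (chi α z).re < (chi α (-z)).re := by
  obtain ⟨hx0, hx1, hy0, _⟩ := hz
  have key : ∀ t ∈ Set.Icc (-z.re) z.re,
      HasDerivAt (fun s : ℝ => (chi α ((s : ℂ) + z.im * I)).re)
        (((1 / 2 : ℂ) * Complex.log (2 * (α : ℂ) / (1 + ((t : ℂ) + z.im * I) +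
          csqrt (4 * (α : ℂ) ^ 2 + (1 + ((t : ℂ) + z.im * I)) ^ 2)))).re) t := by
    intro t ht
    have hret : -1 < ((t : ℂ) + z.im * I).re := by
      simp only [Complex.add_re, Complex.ofReal_re, Complex.mul_re, Complex.I_re,
        Complex.ofReal_im, Complex.I_im]
      have := ht.1
      simp only [mul_zero, mul_one, zero_sub]  -- simplify
      nlinarith
    have himt : 0 < ((t : ℂ) + z.im * I).im := by
      simp [Complex.add_im, Complex.mul_im]
      exact hy0
    have hd := chi_hasDerivAt hα (α := α) hret himt
    have hinner : HasDerivAt (fun w : ℂ => w + z.im * I) 1 (t : ℂ) :=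
      (hasDerivAt_id _).add_const _
    have hd2 := hd.comp (t : ℂ) hinner
    have hd3 : HasDerivAt (fun w : ℂ => chi α (w + z.im * I))
        ((1 / 2 : ℂ) * Complex.log (2 * (α : ℂ) / (1 + ((t : ℂ) + z.im * I) +
          csqrt (4 * (α : ℂ) ^ 2 + (1 + ((t : ℂ) + z.im * I)) ^ 2)))) (t : ℂ) := by
      have h5 := hd2; rw [mul_one] at h5; exact h5
    exact hd3.real_of_complex
  have hanti : StrictAntiOn (fun s : ℝ => (chi α ((s : ℂ) + z.im * I)).re)
      (Set.Icc (-z.re) z.re) := by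
    apply strictAntiOn_of_deriv_neg (convex_Icc _ _)
    · intro t ht
      exact (key t ht).continuousAt.continuousWithinAt
    · intro t ht
      rw [interior_Icc] at ht
      have ht' : t ∈ Set.Icc (-z.re) z.re := Set.mem_Icc.mpr ⟨ht.1.le, ht.2.le⟩
      rw [(key t ht').deriv]
      apply re_deriv_neg hα
      · simp only [Complex.add_re, Complex.ofReal_re, Complex.mul_re, Complex.I_re,
          Complex.ofReal_im, Complex.I_im, mul_zero, mul_one, zero_sub]
        have := ht.1
        nlinarith
      · simp [Complex.add_im, Complex.mul_im]
        exact hy0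
  have hmem1 : (-z.re) ∈ Set.Icc (-z.re) z.re := Set.mem_Icc.mpr ⟨le_refl _, by linarith⟩
  have hmem2 : z.re ∈ Set.Icc (-z.re) z.re := Set.mem_Icc.mpr ⟨by linarith, le_refl _⟩
  have hlt := hanti hmem1 hmem2 (by linarith)
  -- hlt : f z.re < f (-z.re)
  have he1 : (chi α ((z.re : ℂ) + z.im * I)).re = (chi α z).re := by
    rw [Complex.re_add_im]
  have hwre : -1 < (((-z.re : ℝ) : ℂ) + z.im * I).re := by
    simp [Complex.add_re, Complex.mul_re]
    linarith
  have hwim : 0 < (((-z.re : ℝ) : ℂ) + z.im * I).im := by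
    simp [Complex.add_im, Complex.mul_im]
    exact hy0
  have hconj := chi_conj hα (w := ((-z.re : ℝ) : ℂ) + z.im * I) hwre hwim
  have hwc : (starRingEnd ℂ) (((-z.re : ℝ) : ℂ) + z.im * I) = -z := by
    apply Complex.ext <;> simp
  have he2 : (chi α (((-z.re : ℝ) : ℂ) + z.im * I)).re = (chi α (-z)).re := by
    rw [← hwc, hconj, Complex.conj_re]
  calc (chi α z).re = (chi α ((z.re : ℂ) + z.im * I)).re := he1.symm
    _ < (chi α (((-z.re : ℝ) : ℂ) + z.im * I)).re := by
        have := hlt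
        simpa using this
    _ = (chi α (-z)).re := he2
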